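/- Fixing a positive definite Σ₁ and mean μ₁, the map (μ₀, L₀) ↦ KL(N(μ₀, L₀L₀ᵀ) ‖ N(μ₁, Σ₁)) is convex in (μ₀, L₀) when restricted to L₀ lower-triangular with positive diagonal entries. -/

import Mathlib

open Matrix

lemma psd_diag_nonneg {n : ℕ} {A : Matrix (Fin n) (Fin n) ℝ} (hA : A.PosSemidef)
    (i : Fin n) : 0 ≤ A i i := by
  have := hA.dotProduct_mulVec_nonneg (Pi.single i 1)
  simpa [mulVec, dotProduct, Pi.single_apply] using this

lemma psd_trace_nonneg {n : ℕ} {A : Matrix (Fin n) (Fin n) ℝ} (hA : A.PosSemidef) :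
    0 ≤ A.trace :=
  Finset.sum_nonneg fun i _ => psd_diag_nonneg hA i

lemma trace_quad_nonneg {n : ℕ} {A : Matrix (Fin n) (Fin n) ℝ} (hA : A.PosSemidef)
    (N : Matrix (Fin n) (Fin n) ℝ) : 0 ≤ (A * (N * Nᵀ)).trace := by
  have h1 : (Nᵀ * A * N).PosSemidef := by
    simpa [conjTranspose_eq_transpose_of_trivial] using hA.conjTranspose_mul_mul_same N
  have h2 : (A * (N * Nᵀ)).trace = (Nᵀ * A * N).trace := by
    rw [trace_mul_comm, trace_mul_comm (Nᵀ*A) N, ← Matrix.mul_assoc]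
  rw [h2]; exact psd_trace_nonneg h1

lemma trace_cross_symm {n : ℕ} {A : Matrix (Fin n) (Fin n) ℝ} (hs : Aᵀ = A)
    (L M : Matrix (Fin n) (Fin n) ℝ) :
    (A * (M * Lᵀ)).trace = (A * (L * Mᵀ)).trace := by
  conv_lhs => rw [← trace_transpose]
  simp only [transpose_mul, transpose_transpose, hs]
  exact trace_mul_comm _ _


lemma trace_quad_convex {n : ℕ} {A : Matrix (Fin n) (Fin n) ℝ} (hA : A.PosSemidef)
    (hs : Aᵀ = A) (L M : Matrix (Fin n) (Fin n) ℝ) {a b : ℝ}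
    (ha : 0 ≤ a) (hb : 0 ≤ b) (hab : a + b = 1) :
    (A * ((a • L + b • M) * (a • L + b • M)ᵀ)).trace ≤
      a * (A * (L * Lᵀ)).trace + b * (A * (M * Mᵀ)).trace := by
  have hc := trace_cross_symm hs L M
  have ht := trace_quad_nonneg hA (L - M)
  have e1 : (A * ((a • L + b • M) * (a • L + b • M)ᵀ)).trace =
      a^2 * (A * (L * Lᵀ)).trace + (2*(a*b)) * (A * (L * Mᵀ)).trace
        + b^2 * (A * (M * Mᵀ)).trace := by
    simp only [transpose_add, transpose_smul, Matrix.mul_add, Matrix.add_mul,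
      Matrix.mul_smul, Matrix.smul_mul, trace_add, trace_smul, smul_eq_mul, smul_smul]
    rw [hc]; ring
  have e2 : (A * ((L - M) * (L - M)ᵀ)).trace =
      (A * (L * Lᵀ)).trace - 2 * (A * (L * Mᵀ)).trace + (A * (M * Mᵀ)).trace := by
    simp only [transpose_sub, Matrix.mul_sub, Matrix.sub_mul, trace_sub]
    rw [hc]; ring
  rw [e1]
  have key : a * (A * (L * Lᵀ)).trace + b * (A * (M * Mᵀ)).trace -
      (a^2 * (A * (L * Lᵀ)).trace + (2*(a*b)) * (A * (L * Mᵀ)).trace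
        + b^2 * (A * (M * Mᵀ)).trace) =
      a * b * ((A * ((L - M) * (L - M)ᵀ)).trace) := by
    have hb' : b = 1 - a := by linarith
    rw [e2, hb']; ring
  nlinarith [mul_nonneg (mul_nonneg ha hb) ht, key]

lemma dot_quad_convex {n : ℕ} {A : Matrix (Fin n) (Fin n) ℝ} (hA : A.PosSemidef)
    (hs : Aᵀ = A) (u v : Fin n → ℝ) {a b : ℝ}
    (ha : 0 ≤ a) (hb : 0 ≤ b) (hab : a + b = 1) :
    (a • u + b • v) ⬝ᵥ A *ᵥ (a • u + b • v) ≤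
      a * (u ⬝ᵥ A *ᵥ u) + b * (v ⬝ᵥ A *ᵥ v) := by
  have hc : v ⬝ᵥ A *ᵥ u = u ⬝ᵥ A *ᵥ v := by
    rw [dotProduct_mulVec]
    conv_lhs => rw [← hs]
    rw [vecMul_transpose, dotProduct_comm]
  have ht := hA.dotProduct_mulVec_nonneg (u - v)
  rw [star_trivial] at ht
  have e1 : (a • u + b • v) ⬝ᵥ A *ᵥ (a • u + b • v) =
      a^2 * (u ⬝ᵥ A *ᵥ u) + (2*(a*b)) * (u ⬝ᵥ A *ᵥ v) + b^2 * (v ⬝ᵥ A *ᵥ v) := by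
    simp only [mulVec_add, mulVec_smul, dotProduct_add, add_dotProduct,
      dotProduct_smul, smul_dotProduct, smul_eq_mul]
    rw [hc]; ring
  have e2 : (u - v) ⬝ᵥ A *ᵥ (u - v) =
      (u ⬝ᵥ A *ᵥ u) - 2 * (u ⬝ᵥ A *ᵥ v) + (v ⬝ᵥ A *ᵥ v) := by
    simp only [mulVec_sub, dotProduct_sub, sub_dotProduct]
    rw [hc]; ring
  rw [e1]
  have key : a * (u ⬝ᵥ A *ᵥ u) + b * (v ⬝ᵥ A *ᵥ v) -
      (a^2 * (u ⬝ᵥ A *ᵥ u) + (2*(a*b)) * (u ⬝ᵥ A *ᵥ v) + b^2 * (v ⬝ᵥ A *ᵥ v)) =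
      a * b * ((u - v) ⬝ᵥ A *ᵥ (u - v)) := by
    have hb' : b = 1 - a := by linarith
    rw [e2, hb']; ring
  nlinarith [mul_nonneg (mul_nonneg ha hb) ht, key]

lemma log_det_sq {n : ℕ} (X : Matrix (Fin n) (Fin n) ℝ)
    (hX : ∀ i j : Fin n, i < j → X i j = 0) (hpos : ∀ i, 0 < X i i) :
    Real.log ((X * Xᵀ).det) = 2 * ∑ i, Real.log (X i i) := by
  have hdet : X.det = ∏ i, X i i :=
    det_of_lowerTriangular X (fun i j h => hX i j (by simpa using h))
  have hne : ∀ i ∈ Finset.univ, X i i ≠ 0 := fun i _ => (hpos i).ne'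
  have hprodne : X.det ≠ 0 := by
    rw [hdet]; exact Finset.prod_ne_zero_iff.mpr hne
  rw [det_mul, det_transpose, Real.log_mul hprodne hprodne, hdet,
    Real.log_prod hne]
  ring

lemma combo_pos {a b x y : ℝ} (ha : 0 ≤ a) (hb : 0 ≤ b) (hab : a + b = 1)
    (hx : 0 < x) (hy : 0 < y) : 0 < a * x + b * y := by
  rcases eq_or_lt_of_le ha with h | h
  · have : b = 1 := by linarith
    simpa [← h, this] using hy
  · nlinarith [mul_nonneg hb hy.le]

/-- Fixing a positive definite `Σ₁` and mean `μ₁`, the map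
`(μ₀, L₀) ↦ KL(N(μ₀, L₀L₀ᵀ) ‖ N(μ₁, Σ₁))`, given in closed form by
`½[log det Σ₁ − log det(L₀L₀ᵀ) − n + Tr(Σ₁⁻¹L₀L₀ᵀ) + (μ₁−μ₀)ᵀΣ₁⁻¹(μ₁−μ₀)]`,
is convex on the set of pairs with `L₀` lower triangular with positive diagonal. -/
theorem kl_gaussian_convex_in_first {n : ℕ} (μ₁ : Fin n → ℝ)
    (S₁ : Matrix (Fin n) (Fin n) ℝ) (hS₁ : S₁.PosDef) :
    ConvexOn ℝ
      {p : (Fin n → ℝ) × Matrix (Fin n) (Fin n) ℝ |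
        (∀ i j : Fin n, i < j → p.2 i j = 0) ∧ ∀ i : Fin n, 0 < p.2 i i}
      (fun p =>
        (1 / 2) * (Real.log S₁.det - Real.log ((p.2 * p.2ᵀ).det) - n +
          (S₁⁻¹ * (p.2 * p.2ᵀ)).trace +
          (μ₁ - p.1) ⬝ᵥ (S₁⁻¹ *ᵥ (μ₁ - p.1)))) := by
  have hApd : (S₁⁻¹).PosDef := hS₁.inv
  have hA : (S₁⁻¹).PosSemidef := hApd.posSemidef
  have hs : (S₁⁻¹)ᵀ = S₁⁻¹ := by
    have := hApd.isHermitian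
    simpa [conjTranspose_eq_transpose_of_trivial] using this.eq
  constructor
  · -- convexity of the set
    rintro p ⟨hp1, hp2⟩ q ⟨hq1, hq2⟩ a b ha hb hab
    constructor
    · intro i j hij
      simp only [Prod.snd_add, Prod.smul_snd, Matrix.add_apply, Matrix.smul_apply,
        smul_eq_mul, hp1 i j hij, hq1 i j hij, mul_zero, add_zero]
    · intro i
      simp only [Prod.snd_add, Prod.smul_snd, Matrix.add_apply, Matrix.smul_apply,
        smul_eq_mul]
      exact combo_pos ha hb hab (hp2 i) (hq2 i)
  · rintro p ⟨hp1, hp2⟩ q ⟨hq1, hq2⟩ a b ha hb hab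
    simp only [Prod.snd_add, Prod.smul_snd, Prod.fst_add, Prod.smul_fst, smul_eq_mul]
    set L := p.2; set M := q.2
    -- log term
    have hXzero : ∀ i j : Fin n, i < j → (a • L + b • M) i j = 0 := by
      intro i j hij
      simp [Matrix.add_apply, Matrix.smul_apply, hp1 i j hij, hq1 i j hij]
    have hXpos : ∀ i, 0 < (a • L + b • M) i i := by
      intro i
      simp only [Matrix.add_apply, Matrix.smul_apply, smul_eq_mul]
      exact combo_pos ha hb hab (hp2 i) (hq2 i)
    have hlog : a * Real.log ((L * Lᵀ).det) + b * Real.log ((M * Mᵀ).det) ≤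
        Real.log (((a • L + b • M) * (a • L + b • M)ᵀ).det) := by
      rw [log_det_sq L hp1 hp2, log_det_sq M hq1 hq2,
        log_det_sq _ hXzero hXpos]
      have hsum : ∀ i ∈ Finset.univ,
          a * Real.log (L i i) + b * Real.log (M i i) ≤
            Real.log ((a • L + b • M) i i) := by
        intro i _
        have := (strictConcaveOn_log_Ioi.concaveOn).2
          (Set.mem_Ioi.mpr (hp2 i)) (Set.mem_Ioi.mpr (hq2 i)) ha hb hab
        simpa [Matrix.add_apply, Matrix.smul_apply, smul_eq_mul] using this
      have := Finset.sum_le_sum hsum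
      simp only [Finset.sum_add_distrib, ← Finset.mul_sum] at this
      linarith
    have htr := trace_quad_convex hA hs L M ha hb hab
    have hdot : (μ₁ - (a • p.1 + b • q.1)) ⬝ᵥ S₁⁻¹ *ᵥ (μ₁ - (a • p.1 + b • q.1)) ≤
        a * ((μ₁ - p.1) ⬝ᵥ S₁⁻¹ *ᵥ (μ₁ - p.1)) +
          b * ((μ₁ - q.1) ⬝ᵥ S₁⁻¹ *ᵥ (μ₁ - q.1)) := by
      have hμ : μ₁ - (a • p.1 + b • q.1) = a • (μ₁ - p.1) + b • (μ₁ - q.1) := by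
        funext i
        simp only [Pi.sub_apply, Pi.add_apply, Pi.smul_apply, smul_eq_mul]
        linear_combination (-(μ₁ i)) * hab
      rw [hμ]
      exact dot_quad_convex hA hs (μ₁ - p.1) (μ₁ - q.1) ha hb hab
    have hconst : a * (Real.log S₁.det - n) + b * (Real.log S₁.det - n)
        = Real.log S₁.det - n := by rw [← add_mul, hab, one_mul]
    nlinarith [hlog, htr, hdot, hconst]
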